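/- Blow-up alternatives (discrete Brezis–Merle): Let uₙ : V → ℝ be a sequence of functions satisfying −Δuₙ(x) = hₙ(x)e^{uₙ(x)} − cₙ for all x ∈ V, where hₙ : V → ℝ and cₙ ∈ ℝ satisfy hₙ(x) → h(x) for every x ∈ V and cₙ → c as n → ∞. Then there is a subsequence (u_{n_k}) such that one of the following alternatives holds: (1) sup_k max_{x∈V} |u_{n_k}(x)| < ∞; or (2) max_{x∈V} u_{n_k}(x) → −∞ as k → ∞; or (3) there exists x₀ ∈ V with h(x₀) = 0 and u_{n_k}(x₀) → +∞ as k → ∞, inf_k min_{x∈V} u_{n_k}(x) > −∞, and sup_k sup{u_{n_k}(x) : x ∈ V, h(x) > 0} < ∞. -/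

import Mathlib

open Finset Real

/-- The graph Laplacian: `Δu(x) = (1/μ x) * Σ_y ω x y * (u y - u x)`. -/
noncomputable def graphLap {V : Type*} [Fintype V] (ω : V → V → ℝ) (μ : V → ℝ)
    (u : V → ℝ) (x : V) : ℝ :=
  (1 / μ x) * ∑ y, ω x y * (u y - u x)

/-- The integral of `f` over `V` with respect to the vertex measure `μ`. -/
noncomputable def graphInt {V : Type*} [Fintype V] (μ : V → ℝ) (f : V → ℝ) : ℝ :=
  ∑ x, f x * μ x

/-- Connectivity: any two distinct vertices are joined by a chain of positively
weighted edges. -/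
def graphConn {V : Type*} (ω : V → V → ℝ) : Prop :=
  ∀ x y : V, x ≠ y → ∃ (m : ℕ) (p : ℕ → V), p 0 = x ∧ p m = y ∧
    ∀ i < m, 0 < ω (p i) (p (i + 1))

/-- The gradient form `Γ(u,v)(x)`. -/
noncomputable def graphGamma {V : Type*} [Fintype V] (ω : V → V → ℝ) (μ : V → ℝ)
    (u v : V → ℝ) (x : V) : ℝ :=
  (1 / (2 * μ x)) * ∑ y, ω x y * (u y - u x) * (v y - v x)

/-- The length of the gradient: `|∇u|(x) = √(Γ(u,u)(x))`. -/
noncomputable def graphGradNorm {V : Type*} [Fintype V] (ω : V → V → ℝ) (μ : V → ℝ)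
    (u : V → ℝ) (x : V) : ℝ :=
  Real.sqrt (graphGamma ω μ u u x)

/-- The functional `J_{h,f}(u) = ∫_V (½|∇u|² + f·u − h·e^u) dμ`. -/
noncomputable def Jfunc {V : Type*} [Fintype V] (ω : V → V → ℝ) (μ : V → ℝ)
    (h f : V → ℝ) (u : V → ℝ) : ℝ :=
  graphInt μ (fun x => (1 / 2) * (graphGradNorm ω μ u x) ^ 2 + f x * u x - h x * Real.exp (u x))

section Aux
variable {V : Type*} [Fintype V]
set_option linter.unusedSectionVars false

lemma mu_lap (ω : V → V → ℝ) (μ : V → ℝ) (hμ : ∀ x, 0 < μ x) (u : V → ℝ) (x : V) :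
    μ x * graphLap ω μ u x = ∑ y, ω x y * (u y - u x) := by
  unfold graphLap
  rw [one_div, ← mul_assoc, mul_inv_cancel₀ (hμ x).ne', one_mul]

lemma antisym_double {s : Finset V} (ω : V → V → ℝ) (hsymm : ∀ x y, ω x y = ω y x)
    (u : V → ℝ) : ∑ x ∈ s, ∑ y ∈ s, ω x y * (u x - u y) = 0 := by
  have h2 : (∑ x ∈ s, ∑ y ∈ s, ω x y * (u x - u y))
      = ∑ x ∈ s, ∑ y ∈ s, -(ω x y * (u x - u y)) := by
    rw [Finset.sum_comm]
    refine Finset.sum_congr rfl fun x _ => Finset.sum_congr rfl fun y _ => ?_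
    rw [hsymm]; ring
  simp only [Finset.sum_neg_distrib] at h2
  linarith

lemma sum_mu_lap (ω : V → V → ℝ) (μ : V → ℝ) (hsymm : ∀ x y, ω x y = ω y x)
    (hμ : ∀ x, 0 < μ x) (u : V → ℝ) :
    ∑ x, μ x * graphLap ω μ u x = 0 := by
  have h1 : ∀ x ∈ Finset.univ, μ x * graphLap ω μ u x = ∑ y, -(ω x y * (u x - u y)) := by
    intro x _
    rw [mu_lap ω μ hμ]
    exact Finset.sum_congr rfl fun y _ => by ring
  rw [Finset.sum_congr rfl h1]
  simp only [Finset.sum_neg_distrib]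
  rw [antisym_double ω hsymm u]
  simp

lemma crossing {α : Type*} (P : α → Prop) (p : ℕ → α) :
    ∀ m : ℕ, P (p 0) → ¬ P (p m) → ∃ i < m, P (p i) ∧ ¬ P (p (i+1)) := by
  intro m
  induction m with
  | zero => intro h0 hm; exact absurd h0 hm
  | succ m ih =>
    intro h0 hm
    by_cases hpm : P (p m)
    · exact ⟨m, Nat.lt_succ_self m, hpm, hm⟩
    · obtain ⟨i, hi, hh⟩ := ih h0 hpm
      exact ⟨i, hi.trans (Nat.lt_succ_self m), hh⟩

end Aux

section Step
variable {V : Type*} [Fintype V]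
set_option linter.unusedSectionVars false

lemma step_lemma (ω : V → V → ℝ) (μ : V → ℝ)
    (hsymm : ∀ x y, ω x y = ω y x) (hnonneg : ∀ x y, 0 ≤ ω x y)
    (hconn : graphConn ω) (hμ : ∀ x, 0 < μ x)
    (w₀ : ℝ) (hw₀ : 0 < w₀) (hw : ∀ a b, 0 < ω a b → w₀ ≤ ω a b)
    (u h : V → ℝ) (c K : ℝ) (hKc : |c| ≤ K) (hKh : ∑ x, |h x| * μ x ≤ K)
    (heq : ∀ x, -graphLap ω μ u x = h x * Real.exp (u x) - c)
    (B : ℝ) (z₀ : V) (hz₀ : u z₀ ≤ B) (x₁ : V) (hx₁ : B < u x₁) :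
    ∃ x, B < u x ∧ u x ≤ B + (K * (∑ y, μ y) + K * Real.exp B) / w₀ := by
  classical
  set T := Finset.univ.filter (fun x => B < u x) with hT
  set S := Finset.univ.filter (fun x => ¬ B < u x) with hS
  have hmemT : ∀ x, x ∈ T ↔ B < u x := by intro x; simp [hT]
  have hmemS : ∀ x, x ∈ S ↔ u x ≤ B := by intro x; simp [hS]
  -- global identity: ∑ μ h e^u = c * Vol
  have hglob : ∑ x, μ x * (h x * Real.exp (u x)) = c * ∑ x, μ x := by
    have h0 : ∑ x, μ x * graphLap ω μ u x = 0 := sum_mu_lap ω μ hsymm hμ u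
    have h1 : ∀ x ∈ Finset.univ, μ x * graphLap ω μ u x
        = c * μ x - μ x * (h x * Real.exp (u x)) := by
      intro x _
      have hx := heq x
      linear_combination (-(μ x)) * hx
    rw [Finset.sum_congr rfl h1, Finset.sum_sub_distrib, ← Finset.mul_sum] at h0
    linarith [h0]
  -- key sum over T
  have hkey : ∑ x ∈ T, μ x * (-graphLap ω μ u x)
      = ∑ x ∈ T, ∑ y ∈ S, ω x y * (u x - u y) := by
    have h1 : ∀ x ∈ T, μ x * (-graphLap ω μ u x) = ∑ y, ω x y * (u x - u y) := by
      intro x _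
      rw [show μ x * (-graphLap ω μ u x) = -(μ x * graphLap ω μ u x) by ring,
        mu_lap ω μ hμ, ← Finset.sum_neg_distrib]
      exact Finset.sum_congr rfl fun y _ => by ring
    rw [Finset.sum_congr rfl h1]
    have hsplit : ∀ x ∈ T, ∑ y, ω x y * (u x - u y)
        = ∑ y ∈ T, ω x y * (u x - u y) + ∑ y ∈ S, ω x y * (u x - u y) := by
      intro x _
      rw [hT, hS, Finset.sum_filter_add_sum_filter_not]
    rw [Finset.sum_congr rfl hsplit, Finset.sum_add_distrib,
      antisym_double ω hsymm u, zero_add]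
  -- RHS bound
  have hub : ∑ x ∈ T, μ x * (-graphLap ω μ u x) ≤ K * (∑ y, μ y) + K * Real.exp B := by
    have h1 : ∀ x ∈ T, μ x * (-graphLap ω μ u x)
        = μ x * (h x * Real.exp (u x)) - c * μ x := by
      intro x _
      have hx := heq x
      linear_combination (μ x) * hx
    rw [Finset.sum_congr rfl h1, Finset.sum_sub_distrib]
    have hTS : ∑ x ∈ T, μ x * (h x * Real.exp (u x))
        = c * ∑ x, μ x - ∑ x ∈ S, μ x * (h x * Real.exp (u x)) := by
      rw [← hglob, ← Finset.sum_filter_add_sum_filter_not Finset.univ (fun x => B < u x)]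
      rw [← hT, ← hS]; ring
    rw [hTS]
    have hbound1 : - ∑ x ∈ S, μ x * (h x * Real.exp (u x)) ≤ K * Real.exp B := by
      have : ∀ x ∈ S, -(μ x * (h x * Real.exp (u x))) ≤ (|h x| * μ x) * Real.exp B := by
        intro x hx
        have hxB : u x ≤ B := (hmemS x).mp hx
        have e1 : Real.exp (u x) ≤ Real.exp B := Real.exp_le_exp.mpr hxB
        have e2 : -(h x) ≤ |h x| := neg_le_abs _
        have e3 : (0:ℝ) < Real.exp (u x) := Real.exp_pos _
        have p1 : μ x * (-h x) ≤ μ x * |h x| := mul_le_mul_of_nonneg_left e2 (hμ x).le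
        have p2 : μ x * (-h x) * Real.exp (u x) ≤ μ x * |h x| * Real.exp (u x) :=
          mul_le_mul_of_nonneg_right p1 e3.le
        have p3 : μ x * |h x| * Real.exp (u x) ≤ μ x * |h x| * Real.exp B :=
          mul_le_mul_of_nonneg_left e1 (mul_nonneg (hμ x).le (abs_nonneg _))
        nlinarith [p2, p3]
      calc - ∑ x ∈ S, μ x * (h x * Real.exp (u x))
          = ∑ x ∈ S, -(μ x * (h x * Real.exp (u x))) := by rw [Finset.sum_neg_distrib]
        _ ≤ ∑ x ∈ S, (|h x| * μ x) * Real.exp B := Finset.sum_le_sum this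
        _ = (∑ x ∈ S, |h x| * μ x) * Real.exp B := by rw [Finset.sum_mul]
        _ ≤ K * Real.exp B := by
            apply mul_le_mul_of_nonneg_right _ (Real.exp_pos B).le
            calc ∑ x ∈ S, |h x| * μ x ≤ ∑ x, |h x| * μ x := by
                  apply Finset.sum_le_sum_of_subset_of_nonneg (Finset.subset_univ S)
                  intro x _ _
                  exact mul_nonneg (abs_nonneg _) (hμ x).le
              _ ≤ K := hKh
    have hbound2 : c * ∑ x, μ x - c * ∑ x ∈ T, μ x = c * ∑ x ∈ S, μ x := by
      rw [← Finset.sum_filter_add_sum_filter_not Finset.univ (fun x => B < u x), ← hT, ← hS]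
      ring
    have hbound3 : c * ∑ x ∈ S, μ x ≤ K * ∑ y, μ y := by
      have hc : c ≤ |c| := le_abs_self c
      have hμS : (0:ℝ) ≤ ∑ x ∈ S, μ x := Finset.sum_nonneg fun x _ => (hμ x).le
      have hμSV : ∑ x ∈ S, μ x ≤ ∑ y, μ y := by
        apply Finset.sum_le_sum_of_subset_of_nonneg (Finset.subset_univ S)
        intro x _ _; exact (hμ x).le
      have hK0 : 0 ≤ K := le_trans (abs_nonneg c) hKc
      nlinarith
    have hTmul : ∑ x ∈ T, c * μ x = c * ∑ x ∈ T, μ x := by rw [Finset.mul_sum]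
    linarith
  -- find boundary edge with positive weight
  have hx₁z₀ : x₁ ≠ z₀ := by intro hxz; rw [hxz] at hx₁; linarith
  obtain ⟨m, p, hp0, hpm, hpos⟩ := hconn x₁ z₀ hx₁z₀
  have hcross : ∃ i < m, B < u (p i) ∧ ¬ B < u (p (i+1)) := by
    apply crossing (fun v => B < u v) p m
    · rw [hp0]; exact hx₁
    · rw [hpm]; simpa using hz₀
  obtain ⟨i, him, hai, hbi⟩ := hcross
  set a := p i
  set b := p (i+1)
  have hωab : 0 < ω a b := hpos i him
  have haT : a ∈ T := (hmemT a).mpr hai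
  have hbS : b ∈ S := (hmemS b).mpr (not_lt.mp hbi)
  -- single term lower bound
  have hterm : w₀ * (u a - u b) ≤ ∑ x ∈ T, ∑ y ∈ S, ω x y * (u x - u y) := by
    have hab : 0 ≤ u a - u b := by
      have := (hmemS b).mp hbS
      have := (hmemT a).mp haT
      linarith
    have h1 : w₀ * (u a - u b) ≤ ω a b * (u a - u b) :=
      mul_le_mul_of_nonneg_right (hw a b hωab) hab
    have h2 : ω a b * (u a - u b) ≤ ∑ y ∈ S, ω a y * (u a - u y) := by
      apply Finset.single_le_sum (f := fun y => ω a y * (u a - u y)) _ hbS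
      intro y hy
      have : u y ≤ B := (hmemS y).mp hy
      have : 0 ≤ u a - u y := by
        have := (hmemT a).mp haT; linarith
      exact mul_nonneg (hnonneg a y) this
    have h3 : ∑ y ∈ S, ω a y * (u a - u y) ≤ ∑ x ∈ T, ∑ y ∈ S, ω x y * (u x - u y) := by
      apply Finset.single_le_sum (f := fun x => ∑ y ∈ S, ω x y * (u x - u y)) _ haT
      intro x hx
      apply Finset.sum_nonneg
      intro y hy
      have : u y ≤ B := (hmemS y).mp hy
      have : 0 ≤ u x - u y := by
        have := (hmemT x).mp hx; linarith
      exact mul_nonneg (hnonneg x y) this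
    linarith
  refine ⟨a, hai, ?_⟩
  have hfin : w₀ * (u a - u b) ≤ K * (∑ y, μ y) + K * Real.exp B := by
    rw [← hkey] at hterm
    linarith
  have hub2 : u a - u b ≤ (K * (∑ y, μ y) + K * Real.exp B) / w₀ := by
    rw [le_div_iff₀ hw₀]
    linarith [hfin]
  have : u b ≤ B := (hmemS b).mp hbS
  linarith

end Step

section Harnack
variable {V : Type*} [Fintype V] [Nonempty V]
set_option linter.unusedSectionVars false

lemma harnack (ω : V → V → ℝ) (μ : V → ℝ)
    (hsymm : ∀ x y, ω x y = ω y x) (hnonneg : ∀ x y, 0 ≤ ω x y)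
    (hconn : graphConn ω) (hμ : ∀ x, 0 < μ x)
    (w₀ : ℝ) (hw₀ : 0 < w₀) (hw : ∀ a b, 0 < ω a b → w₀ ≤ ω a b)
    (u h : V → ℝ) (c K : ℝ) (hKc : |c| ≤ K) (hKh : ∑ x, |h x| * μ x ≤ K)
    (heq : ∀ x, -graphLap ω μ u x = h x * Real.exp (u x) - c)
    (m : ℝ) (hm : ∃ x, u x ≤ m) :
    ∀ x, u x ≤
      (fun t => t + (K * (∑ y, μ y) + K * Real.exp t) / w₀)^[Fintype.card V - 1] m := by
  classical
  set g : ℝ → ℝ := fun t => t + (K * (∑ y, μ y) + K * Real.exp t) / w₀ with hg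
  have hK0 : 0 ≤ K := le_trans (abs_nonneg c) hKc
  have hVol : 0 ≤ ∑ y, μ y := Finset.sum_nonneg fun y _ => (hμ y).le
  have hgrow : ∀ t, t ≤ g t := by
    intro t
    have : 0 ≤ (K * (∑ y, μ y) + K * Real.exp t) / w₀ :=
      div_nonneg (add_nonneg (mul_nonneg hK0 hVol) (mul_nonneg hK0 (Real.exp_pos t).le)) hw₀.le
    simp only [hg]; linarith
  have hitergrow : ∀ j, g^[j] m ≤ g^[j+1] m := by
    intro j
    rw [Function.iterate_succ_apply']
    exact hgrow _
  set N := Fintype.card V with hN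
  have hN1 : 1 ≤ N := Fintype.card_pos
  obtain ⟨z₀, hz₀⟩ := hm
  have hmono : ∀ j, m ≤ g^[j] m := by
    intro j
    induction j with
    | zero => simp
    | succ j ih => exact ih.trans (hitergrow j)
  have hclaim : ∀ j, min (j+1) N ≤ (Finset.univ.filter (fun x => u x ≤ g^[j] m)).card := by
    intro j
    induction j with
    | zero =>
      have : z₀ ∈ Finset.univ.filter (fun x => u x ≤ g^[0] m) := by
        simp only [Function.iterate_zero, id_eq, Finset.mem_filter, Finset.mem_univ, true_and]
        exact Finset.mem_filter.mpr ⟨Finset.mem_univ _, hz₀⟩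
      have hpos : 0 < (Finset.univ.filter (fun x => u x ≤ g^[0] m)).card :=
        Finset.card_pos.mpr ⟨z₀, this⟩
      omega
    | succ j ih =>
      set Sj := Finset.univ.filter (fun x => u x ≤ g^[j] m) with hSj
      set Sj1 := Finset.univ.filter (fun x => u x ≤ g^[j+1] m) with hSj1
      have hsub : Sj ⊆ Sj1 := by
        intro x hx
        simp only [hSj, Finset.mem_filter, Finset.mem_univ, true_and] at hx
        simp only [hSj1, Finset.mem_filter, Finset.mem_univ, true_and]
        exact hx.trans (hitergrow j)
      by_cases hall : ∀ x, u x ≤ g^[j] m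
      · have : Sj = Finset.univ := by
          apply Finset.eq_univ_of_forall
          intro x
          simp only [hSj, Finset.mem_filter, Finset.mem_univ, true_and]
          exact hall x
        have hcard : N ≤ Sj1.card := by
          have h2 := Finset.card_le_card hsub
          rw [this, Finset.card_univ, ← hN] at h2
          exact h2
        omega
      · push_neg at hall
        obtain ⟨x₁, hx₁⟩ := hall
        obtain ⟨x, hxB, hxle⟩ := step_lemma ω μ hsymm hnonneg hconn hμ w₀ hw₀ hw u h c K
          hKc hKh heq (g^[j] m) z₀ (hz₀.trans (hmono j)) x₁ hx₁
        have hxnot : x ∉ Sj := by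
          simp only [hSj, Finset.mem_filter, Finset.mem_univ, true_and]
          exact not_le.mpr hxB
        have hxin : x ∈ Sj1 := by
          simp only [hSj1, Finset.mem_filter, Finset.mem_univ, true_and]
          rw [Function.iterate_succ_apply']
          exact hxle
        have hss : Sj ⊂ Sj1 := (Finset.ssubset_iff_of_subset hsub).mpr ⟨x, hxin, hxnot⟩
        have := Finset.card_lt_card hss
        have hScard : Sj1.card ≤ N := by
          rw [hN, ← Finset.card_univ]; exact Finset.card_le_univ _
        omega
  have hfin := hclaim (N - 1)
  have huniv : (Finset.univ.filter (fun x => u x ≤ g^[N-1] m)) = Finset.univ := by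
    apply Finset.eq_univ_of_card
    have h1 : (Finset.univ.filter (fun x => u x ≤ g^[N-1] m)).card ≤ Finset.univ.card :=
      Finset.card_le_univ _
    rw [Finset.card_univ] at h1
    omega
  intro x
  have hx : x ∈ Finset.univ.filter (fun x => u x ≤ g^[N-1] m) := by
    rw [huniv]; exact Finset.mem_univ x
  simpa using (Finset.mem_filter.mp hx).2

lemma iter_bound (g : ℝ → ℝ) (K₂ : ℝ) (hK₂ : 0 ≤ K₂) (hg : ∀ t ≤ (0:ℝ), g t ≤ t + K₂) :
    ∀ (j : ℕ) (t : ℝ), t ≤ -(2*K₂*j) → g^[j] t ≤ t + 2*K₂*j := by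
  intro j
  induction j with
  | zero => intro t _; simp
  | succ j ih =>
    intro t ht
    have hcast : ((j+1 : ℕ) : ℝ) = (j : ℝ) + 1 := by push_cast; ring
    have ht' : t ≤ -(2*K₂*j) := by
      rw [hcast] at ht; nlinarith
    have h1 : g^[j] t ≤ t + 2*K₂*j := ih t ht'
    have h2 : g^[j] t ≤ 0 := by rw [hcast] at ht; nlinarith
    rw [Function.iterate_succ_apply']
    have := hg (g^[j] t) h2
    rw [hcast]
    linarith

lemma point_bound (a b D t : ℝ) (ha : 0 < a) (hb : 0 ≤ b) (hD : 0 ≤ D)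
    (hineq : a * Real.exp t ≤ D + b * t) :
    t ≤ max 0 (2 * Real.log ((D + 2*b)/a)) := by
  rcases le_or_gt t 0 with hle | hpos
  · exact le_max_of_le_left hle
  set s := Real.exp (t/2) with hs
  have hs1 : 1 ≤ s := Real.one_le_exp (by linarith)
  have hts : t ≤ 2*s := by
    have := Real.add_one_le_exp (t/2)
    rw [← hs] at this; linarith
  have hsq : Real.exp t = s * s := by
    rw [hs, ← Real.exp_add]; ring_nf
  have h1 : a * (s*s) ≤ D + 2*b*s := by
    rw [← hsq]
    nlinarith
  have h2 : a * s ≤ D + 2*b := by nlinarith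
  have h3 : s ≤ (D + 2*b)/a := (le_div_iff₀ ha).mpr (by linarith)
  have h4 : t/2 = Real.log s := (Real.log_exp _).symm
  have h5 : Real.log s ≤ Real.log ((D+2*b)/a) := Real.log_le_log (by positivity) h3
  have : t ≤ 2 * Real.log ((D+2*b)/a) := by
    have : t = 2*(t/2) := by ring
    rw [this, h4]
    linarith
  exact le_max_of_le_right this

end Harnack

lemma exists_subseq {P : ℕ → ℕ → Prop} (hP : ∀ k N, ∃ n, N ≤ n ∧ P k n) :
    ∃ φ : ℕ → ℕ, StrictMono φ ∧ ∀ k, P k (φ k) := by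
  choose f hf hfP using hP
  set φ : ℕ → ℕ := fun k => Nat.rec (f 0 0) (fun k ih => f (k+1) (ih+1)) k with hφ
  have hstep : ∀ k, φ (k+1) = f (k+1) (φ k + 1) := fun k => rfl
  have h0 : φ 0 = f 0 0 := rfl
  refine ⟨φ, strictMono_nat_of_lt_succ (fun k => ?_), fun k => ?_⟩
  · rw [hstep]
    exact Nat.lt_of_lt_of_le (Nat.lt_succ_self _) (hf (k+1) (φ k + 1))
  · cases k with
    | zero => rw [h0]; exact hfP 0 0
    | succ k => rw [hstep]; exact hfP (k+1) (φ k + 1)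


open Filter in
/-- Discrete Brezis–Merle blow-up alternatives for sequences of solutions of
`−Δuₙ = hₙ e^{uₙ} − cₙ` with `hₙ → h` and `cₙ → c`. -/
theorem blow_up_alternatives {V : Type*} [Fintype V] [Nonempty V]
    (ω : V → V → ℝ) (μ : V → ℝ)
    (hsymm : ∀ x y, ω x y = ω y x)
    (hnonneg : ∀ x y, 0 ≤ ω x y)
    (hconn : graphConn ω)
    (hμ : ∀ x, 0 < μ x)
    (u : ℕ → V → ℝ) (hseq : ℕ → V → ℝ) (cseq : ℕ → ℝ) (h : V → ℝ) (c : ℝ)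
    (heq : ∀ n x, -graphLap ω μ (u n) x = hseq n x * Real.exp (u n x) - cseq n)
    (hconv : ∀ x, Tendsto (fun n => hseq n x) atTop (nhds (h x)))
    (cconv : Tendsto cseq atTop (nhds c)) :
    ∃ φ : ℕ → ℕ, StrictMono φ ∧
      ((∃ C : ℝ, ∀ k x, |u (φ k) x| ≤ C) ∨
       (Tendsto (fun k => ⨆ x, u (φ k) x) atTop atBot) ∨
       (∃ x₀ : V, h x₀ = 0 ∧ Tendsto (fun k => u (φ k) x₀) atTop atTop ∧
         (∃ C : ℝ, ∀ k x, -C ≤ u (φ k) x) ∧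
         (∃ C : ℝ, ∀ k x, 0 < h x → u (φ k) x ≤ C))) := by

  classical
  -- bounds on the data
  obtain ⟨K₁, hK₁⟩ := (cconv.abs).bddAbove_range
  have hhabs : Tendsto (fun n => ∑ x, |hseq n x| * μ x) atTop (nhds (∑ x, |h x| * μ x)) :=
    tendsto_finset_sum _ (fun x _ => ((hconv x).abs).mul_const (μ x))
  obtain ⟨K₂, hK₂⟩ := hhabs.bddAbove_range
  set K := max K₁ K₂ with hKdef
  have hKc : ∀ n, |cseq n| ≤ K :=
    fun n => le_trans (hK₁ ⟨n, rfl⟩) (le_max_left _ _)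
  have hKh : ∀ n, ∑ x, |hseq n x| * μ x ≤ K :=
    fun n => le_trans (hK₂ ⟨n, rfl⟩) (le_max_right _ _)
  have hK0 : 0 ≤ K := le_trans (abs_nonneg (cseq 0)) (hKc 0)
  have hVol : 0 ≤ ∑ y, μ y := Finset.sum_nonneg fun y _ => (hμ y).le
  -- minimal positive weight
  set P : Finset (V × V) :=
    (Finset.univ ×ˢ Finset.univ).filter (fun p : V × V => 0 < ω p.1 p.2) with hPdef
  set w₀ : ℝ := if hP : P.Nonempty then P.inf' hP (fun p => ω p.1 p.2) else 1 with hw₀def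
  have hw₀ : 0 < w₀ := by
    rw [hw₀def]
    split
    · rename_i hP
      rw [Finset.lt_inf'_iff]
      intro b hb
      exact (Finset.mem_filter.mp hb).2
    · exact one_pos
  have hw : ∀ a b, 0 < ω a b → w₀ ≤ ω a b := by
    intro a b hab
    have hmem : (a, b) ∈ P := by
      rw [hPdef]
      simp only [Finset.mem_filter, Finset.mem_product, Finset.mem_univ, true_and]
      exact hab
    have hP : P.Nonempty := ⟨(a, b), hmem⟩
    rw [hw₀def, dif_pos hP]
    exact Finset.inf'_le _ hmem
  -- the growth function g and its iterate bound
  set g : ℝ → ℝ := fun t => t + (K * (∑ y, μ y) + K * Real.exp t) / w₀ with hgdef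
  set K₃ : ℝ := (K * (∑ y, μ y) + K) / w₀ with hK₃def
  have hK₃0 : 0 ≤ K₃ :=
    div_nonneg (add_nonneg (mul_nonneg hK0 hVol) hK0) hw₀.le
  have hgK : ∀ t ≤ (0:ℝ), g t ≤ t + K₃ := by
    intro t ht
    have he : Real.exp t ≤ 1 := Real.exp_le_one_iff.mpr ht
    rw [hgdef, hK₃def]
    simp only
    have h2 : K * Real.exp t ≤ K * 1 := mul_le_mul_of_nonneg_left he hK0
    have h3 : (K * (∑ y, μ y) + K * Real.exp t) / w₀ ≤ (K * (∑ y, μ y) + K) / w₀ := by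
      rw [div_eq_mul_inv, div_eq_mul_inv]
      apply mul_le_mul_of_nonneg_right ?_ (inv_nonneg.mpr hw₀.le)
      linarith
    linarith
  -- argmax choice
  have hxmex : ∀ n, ∃ x, ∀ y, u n y ≤ u n x := fun n => Finite.exists_max (u n)
  choose xm hxm using hxmex
  set M : ℕ → ℝ := fun n => ⨆ x, u n x with hMdef
  have hMle : ∀ n x, u n x ≤ M n := fun n x => le_ciSup (Finite.bddAbove_range _) x
  have hMmax : ∀ n, M n = u n (xm n) := fun n => le_antisymm (ciSup_le (hxm n)) (hMle n _)
  -- Harnack consequence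
  have haru : ∀ n (t : ℝ), (∃ x, u n x ≤ t) →
      ∀ x, u n x ≤ g^[Fintype.card V - 1] t := by
    intro n t hex x
    exact harnack ω μ hsymm hnonneg hconn hμ w₀ hw₀ hw (u n) (hseq n) (cseq n) K
      (hKc n) (hKh n) (heq n) t hex x
  by_cases H1 : ∃ A : ℝ, ∃ N₁ : ℕ, ∀ n ≥ N₁, A ≤ M n
  swap
  · -- alternative 2
    push_neg at H1
    have hstep : ∀ (k N : ℕ), ∃ n, N ≤ n ∧ M n < -(k:ℝ) := by
      intro k N
      obtain ⟨n, hn, hlt⟩ := H1 (-(k:ℝ)) N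
      exact ⟨n, hn, hlt⟩
    obtain ⟨φ, hφmono, hφ⟩ := exists_subseq hstep
    refine ⟨φ, hφmono, Or.inr (Or.inl ?_)⟩
    have hneg : Tendsto (fun k : ℕ => -(k:ℝ)) atTop atBot :=
      tendsto_neg_atTop_atBot.comp tendsto_natCast_atTop_atTop
    exact tendsto_atBot_mono (fun k => (hφ k).le) hneg
  · obtain ⟨A, N₁, hA⟩ := H1
    set t₀ : ℝ := min (-(2*K₃*((Fintype.card V - 1 : ℕ):ℝ)))
      (A - 1 - 2*K₃*((Fintype.card V - 1 : ℕ):ℝ)) with ht₀def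
    have hiter : g^[Fintype.card V - 1] t₀ ≤ A - 1 := by
      have h1 := iter_bound g K₃ hK₃0 hgK (Fintype.card V - 1) t₀ (min_le_left _ _)
      have h2 := min_le_right (-(2*K₃*((Fintype.card V - 1 : ℕ):ℝ)))
        (A - 1 - 2*K₃*((Fintype.card V - 1 : ℕ):ℝ))
      rw [← ht₀def] at h2
      linarith
    have hlow : ∀ n ≥ N₁, ∀ x, t₀ ≤ u n x := by
      intro n hn x
      by_contra hx
      push_neg at hx
      have hall := haru n t₀ ⟨x, hx.le⟩ (xm n)
      have hAn : A ≤ M n := hA n hn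
      rw [hMmax n] at hAn
      linarith
    -- upper bound where h > 0
    have hhalf : ∀ x : V, ∃ Nx : ℕ, ∀ n ≥ Nx, 0 < h x → h x / 2 ≤ hseq n x := by
      intro x
      by_cases hx : 0 < h x
      · have hlt : h x / 2 < h x := by linarith
        have hev : ∀ᶠ n in atTop, h x / 2 ≤ hseq n x :=
          (hconv x).eventually (eventually_ge_nhds hlt)
        obtain ⟨Nx, hNx⟩ := eventually_atTop.mp hev
        exact ⟨Nx, fun n hn _ => hNx n hn⟩
      · exact ⟨0, fun n _ hx' => absurd hx' hx⟩
    choose Nx hNx using hhalf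
    set bC : V → ℝ := fun x => (∑ y, ω x y) / μ x with hbCdef
    set Cx : V → ℝ :=
      fun x => max 0 (2 * Real.log ((K + bC x * |t₀| + 2 * bC x) / (h x / 2))) with hCxdef
    set N₂ := max N₁ (Finset.univ.sup Nx) with hN₂def
    set C₁ : ℝ := Finset.univ.sup' Finset.univ_nonempty Cx with hC₁def
    have hN₂N₁ : N₁ ≤ N₂ := le_max_left _ _
    have hup : ∀ n ≥ N₂, ∀ x, 0 < h x → u n x ≤ C₁ := by
      intro n hn x hx
      have hb0 : 0 ≤ bC x :=
        div_nonneg (Finset.sum_nonneg fun y _ => hnonneg x y) (hμ x).le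
      have hnN₁ : N₁ ≤ n := le_trans hN₂N₁ hn
      have hlapbd : -graphLap ω μ (u n) x ≤ bC x * (u n x - t₀) := by
        have hsum : ∑ y, ω x y * (t₀ - u n x) ≤ ∑ y, ω x y * (u n y - u n x) := by
          apply Finset.sum_le_sum
          intro y _
          exact mul_le_mul_of_nonneg_left (by linarith [hlow n hnN₁ y]) (hnonneg x y)
        have hμx := hμ x
        have hmul : (1 / μ x) * ∑ y, ω x y * (t₀ - u n x)
            ≤ (1 / μ x) * ∑ y, ω x y * (u n y - u n x) :=
          mul_le_mul_of_nonneg_left hsum (by positivity)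
        have heq2 : (1 / μ x) * ∑ y, ω x y * (t₀ - u n x) = bC x * (t₀ - u n x) := by
          rw [← Finset.sum_mul, hbCdef]
          field_simp
        unfold graphLap
        rw [heq2] at hmul
        have : bC x * (t₀ - u n x) = -(bC x * (u n x - t₀)) := by ring
        linarith [hmul]
      have hhn : h x / 2 ≤ hseq n x := by
        apply hNx x n _ hx
        exact le_trans (le_trans (Finset.le_sup (Finset.mem_univ x)) (le_max_right N₁ _)) hn
      have hcn : cseq n ≤ K := le_trans (le_abs_self _) (hKc n)
      have habs : bC x * (-t₀) ≤ bC x * |t₀| :=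
        mul_le_mul_of_nonneg_left (neg_le_abs t₀) hb0
      have hae : (h x / 2) * Real.exp (u n x)
          ≤ (K + bC x * |t₀|) + bC x * (u n x) := by
        have h1 : hseq n x * Real.exp (u n x) ≤ bC x * (u n x - t₀) + cseq n := by
          have := heq n x
          linarith [hlapbd]
        have h2 : (h x / 2) * Real.exp (u n x) ≤ hseq n x * Real.exp (u n x) :=
          mul_le_mul_of_nonneg_right hhn (Real.exp_pos _).le
        nlinarith [h1, h2, habs, hcn]
      have hD0 : 0 ≤ K + bC x * |t₀| :=
        add_nonneg hK0 (mul_nonneg hb0 (abs_nonneg _))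
      have hpb := point_bound (h x / 2) (bC x) (K + bC x * |t₀|) (u n x)
        (by linarith) hb0 hD0 hae
      calc u n x ≤ Cx x := by rw [hCxdef]; exact hpb
        _ ≤ C₁ := Finset.le_sup' Cx (Finset.mem_univ x)
    by_cases H2 : ∃ B : ℝ, ∀ n ≥ N₂, M n ≤ B
    · -- alternative 1
      obtain ⟨B, hB⟩ := H2
      refine ⟨fun k => k + N₂, strictMono_nat_of_lt_succ (fun k => by omega),
        Or.inl ⟨max B (-t₀), ?_⟩⟩
      intro k x
      rw [abs_le]
      constructor
      · have h1 : t₀ ≤ u (k + N₂) x := hlow (k + N₂) (le_trans hN₂N₁ (Nat.le_add_left _ _)) x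
        have h2 : -t₀ ≤ max B (-t₀) := le_max_right _ _
        linarith
      · have h1 : u (k + N₂) x ≤ M (k + N₂) := hMle _ _
        have h2 : M (k + N₂) ≤ B := hB _ (Nat.le_add_left _ _)
        have h3 : B ≤ max B (-t₀) := le_max_left _ _
        linarith
    · -- alternative 3
      push_neg at H2
      have H2' : ∀ (k N₃ : ℕ), ∃ n, N₃ ≤ n ∧ (N₂ ≤ n ∧ (k:ℝ) < M n) := by
        intro k N₃
        set B' : ℝ := (Finset.range (N₃+1)).sup' (by simp) (fun i => max (k:ℝ) (M i))
          with hB'def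
        obtain ⟨n, hn, hlt⟩ := H2 B'
        have hkB' : (k:ℝ) ≤ B' := by
          refine le_trans (le_max_left _ (M 0)) ?_
          exact Finset.le_sup' (fun i => max (k:ℝ) (M i)) (Finset.mem_range.mpr (Nat.succ_pos N₃))
        refine ⟨n, ?_, hn, lt_of_le_of_lt hkB' hlt⟩
        by_contra hcon
        push_neg at hcon
        have hMn : M n ≤ B' := by
          refine le_trans (le_max_right (k:ℝ) _) ?_
          exact Finset.le_sup' (fun i => max (k:ℝ) (M i)) (Finset.mem_range.mpr (by omega))
        linarith
      obtain ⟨φ, hφmono, hφP⟩ := exists_subseq H2'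
      -- pigeonhole on argmax vertex
      obtain ⟨x₀, hx₀⟩ := Finite.exists_infinite_fiber (fun k => xm (φ k))
      have hinf : {k | xm (φ k) = x₀}.Infinite := by
        rw [← Set.infinite_coe_iff]
        exact hx₀
      set ψ := Nat.nth (fun k => xm (φ k) = x₀) with hψdef
      have hψmono : StrictMono ψ := Nat.nth_strictMono hinf
      have hψmem : ∀ k, xm (φ (ψ k)) = x₀ := fun k => Nat.nth_mem_of_infinite hinf k
      set Φ := fun k => φ (ψ k) with hΦdef
      have hΦmono : StrictMono Φ := hφmono.comp hψmono
      have hΦN₂ : ∀ k, N₂ ≤ Φ k := fun k => (hφP (ψ k)).1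
      have hΦN₁ : ∀ k, N₁ ≤ Φ k := fun k => le_trans hN₂N₁ (hΦN₂ k)
      have hgrow2 : ∀ k : ℕ, (k:ℝ) ≤ u (Φ k) x₀ := by
        intro k
        have h1 : ((ψ k):ℝ) < M (Φ k) := (hφP (ψ k)).2
        have haux : xm (Φ k) = x₀ := hψmem k
        rw [hMmax (Φ k), haux] at h1
        have h2 : (k:ℝ) ≤ ((ψ k):ℝ) := Nat.cast_le.mpr hψmono.le_apply
        linarith
      have hblow : Tendsto (fun k => u (Φ k) x₀) atTop atTop :=
        tendsto_atTop_mono hgrow2 tendsto_natCast_atTop_atTop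
      have hle0 : h x₀ ≤ 0 := by
        by_contra hpos
        push_neg at hpos
        obtain ⟨k, hk⟩ := exists_nat_gt C₁
        have h1 := hup (Φ k) (hΦN₂ k) x₀ hpos
        have h2 := hgrow2 k
        linarith
      have hge0 : 0 ≤ h x₀ := by
        have hmaxk : ∀ k, cseq (Φ k) * Real.exp (-(u (Φ k) x₀)) ≤ hseq (Φ k) x₀ := by
          intro k
          have hlap0 : graphLap ω μ (u (Φ k)) x₀ ≤ 0 := by
            unfold graphLap
            apply mul_nonpos_of_nonneg_of_nonpos
            · exact one_div_nonneg.mpr (hμ x₀).le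
            · apply Finset.sum_nonpos
              intro y _
              apply mul_nonpos_of_nonneg_of_nonpos (hnonneg x₀ y)
              have haux : xm (Φ k) = x₀ := hψmem k
              have h1 : u (Φ k) y ≤ u (Φ k) (xm (Φ k)) := hxm (Φ k) y
              rw [haux] at h1
              linarith
          have heqk := heq (Φ k) x₀
          have hkey : cseq (Φ k) ≤ hseq (Φ k) x₀ * Real.exp (u (Φ k) x₀) := by
            linarith
          have := mul_le_mul_of_nonneg_right hkey (Real.exp_pos (-(u (Φ k) x₀))).le
          rwa [mul_assoc, ← Real.exp_add, add_neg_cancel, Real.exp_zero, mul_one] at this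
        have hlim1 : Tendsto (fun k => cseq (Φ k) * Real.exp (-(u (Φ k) x₀)))
            atTop (nhds (c * 0)) := by
          apply Tendsto.mul (cconv.comp hΦmono.tendsto_atTop)
          exact Real.tendsto_exp_atBot.comp (tendsto_neg_atTop_atBot.comp hblow)
        have hlim2 : Tendsto (fun k => hseq (Φ k) x₀) atTop (nhds (h x₀)) :=
          (hconv x₀).comp hΦmono.tendsto_atTop
        have := le_of_tendsto_of_tendsto' hlim1 hlim2 hmaxk
        simpa using this
      refine ⟨Φ, hΦmono, Or.inr (Or.inr ⟨x₀, le_antisymm hle0 hge0, hblow,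
        ⟨-t₀, ?_⟩, ⟨C₁, ?_⟩⟩)⟩
      · intro k x
        have := hlow (Φ k) (hΦN₁ k) x
        linarith
      · intro k x hx
        exact hup (Φ k) (hΦN₂ k) x hx
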